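/- Let λ, n, k, t be positive integers with 1 ≤ t ≤ k ≤ n, λ ≤ [n−t choose k−t]_q, and (λ+1)k − λn ≥ t. Then A_q(n,k,t;λ) = λ. -/

import Mathlib

open scoped Classical

def gaussBinom (q : ℕ) : ℕ → ℕ → ℕ
  | _, 0 => 1
  | 0, _ + 1 => 0
  | n + 1, k + 1 => gaussBinom q n k + q ^ (k + 1) * gaussBinom q n (k + 1)

def IsPacking (F : Type) [Field F] [Fintype F] (n k t lam : ℕ)
    (S : Finset (Submodule F (Fin n → F))) : Prop :=
  (∀ U ∈ S, Module.finrank F U = k) ∧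
    ∀ T : Submodule F (Fin n → F), Module.finrank F T = t →
      (S.filter fun U => T ≤ U).card ≤ lam

noncomputable def packingNumber (F : Type) [Field F] [Fintype F] (n k t lam : ℕ) : ℕ :=
  sSup {m | ∃ S : Finset (Submodule F (Fin n → F)), IsPacking F n k t lam S ∧ S.card = m}

def IsRPacking (F : Type) [Field F] [Fintype F] (n k t lam : ℕ)
    (S : Multiset (Submodule F (Fin n → F))) : Prop :=
  (∀ U ∈ S, Module.finrank F U = k) ∧
    ∀ T : Submodule F (Fin n → F), Module.finrank F T = t →
      (S.countP fun U => T ≤ U) ≤ lam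

noncomputable def rPackingNumber (F : Type) [Field F] [Fintype F] (n k t lam : ℕ) : ℕ :=
  sSup {m | ∃ S : Multiset (Submodule F (Fin n → F)), IsRPacking F n k t lam S ∧ Multiset.card S = m}

lemma gauss_lt_aux (q : ℕ) : ∀ a b, a < b → gaussBinom q a b = 0
  | 0, _ + 1, _ => rfl
  | a + 1, b + 1, h => by
    rw [gaussBinom, gauss_lt_aux q a b (by omega), gauss_lt_aux q a (b + 1) (by omega)]
    simp

lemma gauss_self_aux (q : ℕ) : ∀ a, gaussBinom q a a = 1
  | 0 => rfl
  | a + 1 => by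
    rw [gaussBinom, gauss_self_aux q a, gauss_lt_aux q a (a + 1) (by omega)]
    simp

open Module Submodule in
lemma exists_le_finrank_eq_aux {F V : Type*} [Field F] [AddCommGroup V] [Module F V]
    [FiniteDimensional F V] (W : Submodule F V) (t : ℕ) (h : t ≤ finrank F W) :
    ∃ T : Submodule F V, T ≤ W ∧ finrank F T = t := by
  let b : Basis (Fin (finrank F W)) F W := finBasis F W
  let c : Fin t → W := b ∘ Fin.castLE h
  have hli : LinearIndependent F c := b.linearIndependent.comp _ (Fin.castLE_injective h)
  refine ⟨(span F (Set.range c)).map W.subtype, map_subtype_le _ _, ?_⟩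
  rw [Submodule.finrank_map_subtype_eq, finrank_span_eq_card hli, Fintype.card_fin]

open Module in
lemma inf_rank_aux {F V : Type*} [Field F] [AddCommGroup V] [Module F V]
    [FiniteDimensional F V] (S : Finset (Submodule F V)) (hS : S.Nonempty) :
    finrank F (S.inf id : Submodule F V) + S.card * finrank F V ≥
      (∑ U ∈ S, finrank F U) + finrank F V := by
  induction S using Finset.induction with
  | empty => exact absurd hS (by simp)
  | @insert U S hU ih =>
    rcases S.eq_empty_or_nonempty with rfl | hSne
    · rw [show insert U (∅ : Finset (Submodule F V)) = {U} from rfl,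
        Finset.inf_singleton]
      simp
    · have ihS := ih hSne
      have hinf : Finset.inf (insert U S) id = U ⊓ S.inf id := by
        simp [Finset.inf_insert]
      have hkey : finrank F ↥(U ⊔ S.inf id) + finrank F ↥(U ⊓ S.inf id) =
          finrank F ↥U + finrank F ↥(S.inf id) :=
        Submodule.finrank_sup_add_finrank_inf_eq U (S.inf id)
      have hle : finrank F ↥(U ⊔ S.inf id) ≤ finrank F V := Submodule.finrank_le _
      rw [hinf, Finset.sum_insert hU, Finset.card_insert_of_notMem hU]
      have := ihS
      nlinarith [hkey, hle, this]

open Module in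
lemma coord_span_aux {F : Type} [Field F] (n : ℕ) (A : Finset (Fin n)) :
    finrank F (Submodule.span F (⇑(Pi.basisFun F (Fin n)) '' ↑A) : Submodule F (Fin n → F))
      = A.card := by
  classical
  let b := Pi.basisFun F (Fin n)
  have hli : LinearIndependent F (fun i : (↑A : Set (Fin n)) => b i) :=
    b.linearIndependent.comp _ Subtype.coe_injective
  have himg : ⇑b '' ↑A = Set.range (fun i : (↑A : Set (Fin n)) => b i) := by
    rw [← Set.image_eq_range]
  rw [himg, finrank_span_eq_card hli]
  simp

theorem stmt18 (q n k t lam : ℕ) (F : Type) [Field F] [Fintype F] (hq : Fintype.card F = q)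
    (hlam : 1 ≤ lam) (ht : 1 ≤ t) (htk : t ≤ k) (hkn : k ≤ n)
    (hlam2 : lam ≤ gaussBinom q (n - t) (k - t))
    (hdim : (lam + 1) * k - lam * n ≥ t) :
    packingNumber F n k t lam = lam := by
  classical
  have hnF : Module.finrank F (Fin n → F) = n := by
    rw [Module.finrank_pi]; exact Fintype.card_fin n
  -- from hdim: lam * n + t ≤ (lam + 1) * k
  have hdim' : lam * n + t ≤ (lam + 1) * k := by
    rcases le_or_gt (lam * n) ((lam + 1) * k) with h | h
    · omega
    · omega
  -- upper bound: every packing has card ≤ lam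
  have hub : ∀ S : Finset (Submodule F (Fin n → F)), IsPacking F n k t lam S →
      S.card ≤ lam := by
    intro S hS
    by_contra hc
    push_neg at hc
    obtain ⟨S', hS'sub, hS'card⟩ := S.exists_subset_card_eq (n := lam + 1) hc
    have hS'ne : S'.Nonempty := Finset.card_pos.mp (by omega)
    have hrk : ∀ U ∈ S', Module.finrank F U = k := fun U hU => hS.1 U (hS'sub hU)
    have hsum : (∑ U ∈ S', Module.finrank F ↥U) = (lam + 1) * k := by
      rw [Finset.sum_congr rfl hrk, Finset.sum_const, hS'card, smul_eq_mul]
    have hinf := inf_rank_aux S' hS'ne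
    rw [hsum, hS'card, hnF] at hinf
    have hWt : t ≤ Module.finrank F (S'.inf id : Submodule F (Fin n → F)) := by
      have h1 : (lam + 1) * n = lam * n + n := by ring
      omega
    obtain ⟨T, hTle, hTrk⟩ := exists_le_finrank_eq_aux (S'.inf id) t hWt
    have hcontra := hS.2 T hTrk
    have hsub : S' ⊆ S.filter fun U => T ≤ U := by
      intro U hU
      refine Finset.mem_filter.mpr ⟨hS'sub hU, hTle.trans ?_⟩
      exact Finset.inf_le hU (f := id) |>.trans_eq rfl
    have := Finset.card_le_card hsub
    omega
  -- lower bound: lam ≤ n.choose k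
  have hchoose : lam ≤ n.choose k := by
    rcases eq_or_lt_of_le hkn with rfl | hlt
    · rw [gauss_self_aux] at hlam2
      rw [Nat.choose_self]
      omega
    · -- lam ≤ lam * (n - k) ≤ k - t ≤ k < k + 1 ≤ n.choose k
      have h1 : lam * (n - k) + lam * k = lam * n := by
        rw [← Nat.mul_add]; congr 1; omega
      have h2 : lam ≤ lam * (n - k) := Nat.le_mul_of_pos_right lam (by omega)
      have h3 : lam * n + t ≤ lam * k + k := by
        calc lam * n + t ≤ (lam + 1) * k := hdim'
        _ = lam * k + k := by ring
      have h4 : lam ≤ k := by omega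
      have h5 : k + 1 ≤ n.choose k := by
        calc k + 1 = (k + 1).choose k := (Nat.choose_succ_self_right k).symm
        _ ≤ n.choose k := Nat.choose_le_choose k hlt
      omega
  -- construct a packing of size lam
  have hmem : lam ∈ {m | ∃ S : Finset (Submodule F (Fin n → F)),
      IsPacking F n k t lam S ∧ S.card = m} := by
    have hcardP : lam ≤ (Finset.powersetCard k (Finset.univ : Finset (Fin n))).card := by
      rw [Finset.card_powersetCard, Finset.card_univ, Fintype.card_fin]
      exact hchoose
    obtain ⟨P, hPsub, hPcard⟩ :=
      (Finset.powersetCard k (Finset.univ : Finset (Fin n))).exists_subset_card_eq hcardP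
    set b := Pi.basisFun F (Fin n)
    let f : Finset (Fin n) → Submodule F (Fin n → F) := fun A => Submodule.span F (⇑b '' ↑A)
    have hAk : ∀ A ∈ P, A.card = k := by
      intro A hA
      exact (Finset.mem_powersetCard.mp (hPsub hA)).2
    have hinj : Set.InjOn f ↑P := by
      intro A hA B hB hAB
      have key : ∀ C D : Finset (Fin n), f C = f D → C ⊆ D := by
        intro C D h i hi
        have : b i ∈ f D := h ▸ Submodule.subset_span (Set.mem_image_of_mem _ hi)
        have := (b.self_mem_span_image).mp this
        simpa using this
      exact Finset.Subset.antisymm (key A B hAB) (key B A hAB.symm)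
    refine ⟨P.image f, ⟨?_, ?_⟩, ?_⟩
    · intro U hU
      obtain ⟨A, hA, rfl⟩ := Finset.mem_image.mp hU
      rw [coord_span_aux n A]; exact hAk A hA
    · intro T _
      calc ((P.image f).filter fun U => T ≤ U).card ≤ (P.image f).card :=
            Finset.card_filter_le _ _
        _ ≤ P.card := Finset.card_image_le
        _ = lam := hPcard
    · rw [Finset.card_image_of_injOn hinj, hPcard]
  -- conclude
  have hne : Set.Nonempty {m | ∃ S : Finset (Submodule F (Fin n → F)),
      IsPacking F n k t lam S ∧ S.card = m} := ⟨lam, hmem⟩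
  have hbdd : ∀ m ∈ {m | ∃ S : Finset (Submodule F (Fin n → F)),
      IsPacking F n k t lam S ∧ S.card = m}, m ≤ lam := by
    rintro m ⟨S, hS, rfl⟩
    exact hub S hS
  refine le_antisymm (csSup_le hne hbdd) (le_csSup ⟨lam, hbdd⟩ hmem)
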